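/- Let n ≥ 1 be an integer, n/(n+2) < p < 1, q > n(1−p)/2 with q ≠ 1, D ∈ 𝓜ₙ and u ∈ ℝⁿ. Then the q-Rényi entropy of f_p(D,u,·) equals S_q(f_p(D,u,·)) = (n/2)·log(π(2p−n(1−p))/(1−p)) + (1/(1−q))·log[ Γ(1/(1−p))^q · Γ(q/(1−p)−n/2) / ( Γ(1/(1−p)−n/2)^q · Γ(q/(1−p)) ) ] − (1/2)·log det D. -/

import Mathlib

open MeasureTheory Matrix Real Set

/-- Normalization constant `A_{n,p}` for `n/(n+2) < p < 1`. -/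
noncomputable def gaussA (n : ℕ) (p : ℝ) : ℝ :=
  ((1 - p) / (2 * p - n * (1 - p))) ^ ((n : ℝ) / 2) *
    Real.Gamma (1 / (1 - p)) /
    (Real.pi ^ ((n : ℝ) / 2) * Real.Gamma (1 / (1 - p) - n / 2))

/-- The `p`-Gaussian density for `n/(n+2) < p < 1`. -/
noncomputable def gaussF (n : ℕ) (p : ℝ) (D : Matrix (Fin n) (Fin n) ℝ)
    (u x : Fin n → ℝ) : ℝ :=
  gaussA n p * Real.sqrt D.det *
    (1 + (1 - p) / (2 * p - n * (1 - p)) * ((x - u) ⬝ᵥ D.mulVec (x - u))) ^ (1 / (p - 1))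

/-- The `q`-Rényi entropy of a density `g` on `ℝⁿ`. -/
noncomputable def renyi (n : ℕ) (q : ℝ) (g : (Fin n → ℝ) → ℝ) : ℝ :=
  1 / (1 - q) * Real.log (∫ x : Fin n → ℝ, g x ^ q)


lemma betaIoo (a b : ℝ) (ha : 0 < a) (hb : 0 < b) :
    ∫ t in Ioo (0:ℝ) 1, t ^ (a-1) * (1-t) ^ (b-1) =
      Real.Gamma a * Real.Gamma b / Real.Gamma (a+b) := by
  have hab : Real.Gamma (a+b) ≠ 0 := (Real.Gamma_pos_of_pos (by linarith)).ne'
  have key := Complex.Gamma_mul_Gamma_eq_betaIntegral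
    (s := (a:ℂ)) (t := (b:ℂ)) (by simpa using ha) (by simpa using hb)
  have hbeta : Complex.betaIntegral (a:ℂ) (b:ℂ) =
      ((∫ t in Ioo (0:ℝ) 1, t ^ (a-1) * (1-t) ^ (b-1) : ℝ) : ℂ) := by
    rw [Complex.betaIntegral, intervalIntegral.integral_of_le zero_le_one,
      ← MeasureTheory.integral_Ioc_eq_integral_Ioo]
    have : ∫ x in Ioc (0:ℝ) 1, (x:ℂ) ^ ((a:ℂ)-1) * ((1:ℂ)-x) ^ ((b:ℂ)-1) =
        ∫ x in Ioc (0:ℝ) 1, ((x ^ (a-1) * (1-x) ^ (b-1) : ℝ) : ℂ) := by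
      refine setIntegral_congr_ae measurableSet_Ioc (Filter.Eventually.of_forall fun x hx => ?_)
      have hx0 : (0:ℝ) ≤ x := hx.1.le
      have hx1 : (0:ℝ) ≤ 1 - x := by linarith [hx.2]
      rw [show ((a:ℂ)-1) = ((a-1:ℝ):ℂ) by push_cast; ring,
        show ((b:ℂ)-1) = ((b-1:ℝ):ℂ) by push_cast; ring,
        show ((1:ℂ) - (x:ℂ)) = ((1-x:ℝ):ℂ) by push_cast; ring,
        ← Complex.ofReal_cpow hx0, ← Complex.ofReal_cpow hx1]
      push_cast; ring
    rw [this]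
    exact integral_ofReal
  rw [hbeta] at key
  have : ((Real.Gamma a * Real.Gamma b : ℝ) : ℂ) =
      ((Real.Gamma (a+b) * ∫ t in Ioo (0:ℝ) 1, t ^ (a-1) * (1-t) ^ (b-1) : ℝ) : ℂ) := by
    push_cast [← Complex.Gamma_ofReal]; push_cast at key ⊢; linear_combination key
  have h2 := Complex.ofReal_injective this
  field_simp
  linarith [h2]

lemma betaIoi (a b : ℝ) (ha : 0 < a) (hb : 0 < b) :
    ∫ u in Ioi (0:ℝ), u ^ (a-1) * (1+u) ^ (-(a+b)) =
      Real.Gamma a * Real.Gamma b / Real.Gamma (a+b) := by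
  have himg : (fun t : ℝ => t / (1-t)) '' Ioo 0 1 = Ioi 0 := by
    ext y
    constructor
    · rintro ⟨t, ht, rfl⟩
      exact div_pos ht.1 (by linarith [ht.2])
    · intro hy
      refine ⟨y / (1+y), ⟨div_pos hy (by linarith [mem_Ioi.mp hy]), ?_⟩, ?_⟩
      · rw [div_lt_one (by linarith [mem_Ioi.mp hy])]; linarith [mem_Ioi.mp hy]
      · have h1 : (0:ℝ) < 1 + y := by linarith [mem_Ioi.mp hy]
        field_simp
        ring
  have hderiv : ∀ t ∈ Ioo (0:ℝ) 1, HasDerivWithinAt (fun t : ℝ => t / (1-t))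
      ((1-t)^2)⁻¹ (Ioo 0 1) t := by
    intro t ht
    have h1 : (1:ℝ) - t ≠ 0 := by
      have h2 := ht.2
      intro h
      nlinarith [sub_eq_zero.mp h]
    have hd := ((hasDerivAt_id t).div ((hasDerivAt_id t).const_sub 1) h1)
    refine hd.hasDerivWithinAt.congr_deriv ?_
    simp only [id]
    field_simp
    ring
  have hinj : InjOn (fun t : ℝ => t / (1-t)) (Ioo 0 1) := by
    intro x hx y hy h
    have hx1 : (1:ℝ) - x ≠ 0 := by have := hx.2; intro hc; linarith [sub_eq_zero.mp hc]
    have hy1 : (1:ℝ) - y ≠ 0 := by have := hy.2; intro hc; linarith [sub_eq_zero.mp hc]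
    field_simp at h
    linarith
  rw [← himg, integral_image_eq_integral_abs_deriv_smul measurableSet_Ioo hderiv hinj]
  rw [← betaIoo a b ha hb]
  refine setIntegral_congr_ae measurableSet_Ioo (Filter.Eventually.of_forall fun t ht => ?_)
  have ht0 : (0:ℝ) < t := ht.1
  have ht1 : (0:ℝ) < 1 - t := by linarith [ht.2]
  have h1 : (1:ℝ) + t / (1-t) = (1-t)⁻¹ := by field_simp; ring
  rw [smul_eq_mul, h1, abs_of_pos (by positivity), div_rpow ht0.le ht1.le]
  rw [show (((1-t)^2)⁻¹ : ℝ) = (1-t) ^ (-2:ℝ) by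
    rw [← Real.rpow_natCast (1-t) 2, ← Real.rpow_neg ht1.le]; norm_num]
  rw [← Real.rpow_neg_one (1-t), ← Real.rpow_mul ht1.le, div_eq_mul_inv,
    ← Real.rpow_neg ht1.le]
  rw [show (1-t) ^ (-2:ℝ) * (t ^ (a-1) * ((1-t) ^ (-(a-1))) * (1-t) ^ ((-1)*(-(a+b))))
      = t ^ (a-1) * ((1-t) ^ (-2:ℝ) * (1-t) ^ (-(a-1)) * (1-t) ^ ((-1)*(-(a+b)))) by ring,
    ← Real.rpow_add ht1, ← Real.rpow_add ht1]
  congr 1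
  ring

lemma euclid_int (n : ℕ) (hn : 1 ≤ n) (s : ℝ) (hs : (n:ℝ)/2 < s) :
    ∫ x : EuclideanSpace ℝ (Fin n), (1 + ‖x‖^2) ^ (-s) =
      Real.pi ^ ((n:ℝ)/2) * Real.Gamma (s - n/2) / Real.Gamma s := by
  have hnR : (1:ℝ) ≤ (n:ℝ) := by exact_mod_cast hn
  have hn2 : (0:ℝ) < (n:ℝ)/2 := by linarith
  have hs0 : (0:ℝ) < s := lt_trans hn2 hs
  haveI : Nonempty (Fin n) := ⟨⟨0, hn⟩⟩
  haveI : Nontrivial (EuclideanSpace ℝ (Fin n)) := inferInstance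
  have hdim : Module.finrank ℝ (EuclideanSpace ℝ (Fin n)) = n := finrank_euclideanSpace_fin
  rw [integral_fun_norm_addHaar (volume : Measure (EuclideanSpace ℝ (Fin n)))
    (fun r => (1 + r^2) ^ (-s))]
  rw [hdim, measureReal_def, EuclideanSpace.volume_ball, Fintype.card_fin]
  have hsub : ∫ y in Ioi (0:ℝ), y ^ (n-1) • (1 + y^2) ^ (-s) =
      (1/2) * (Real.Gamma ((n:ℝ)/2) * Real.Gamma (s - n/2) / Real.Gamma s) := by
    have key := MeasureTheory.integral_comp_rpow_Ioi
      (fun u => (1/2 : ℝ) * (u ^ ((n:ℝ)/2 - 1) * (1+u) ^ (-s))) (two_ne_zero (α := ℝ))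
    have congr1 : ∫ y in Ioi (0:ℝ), y ^ (n-1) • (1 + y^2) ^ (-s) =
        ∫ x in Ioi (0:ℝ), (|(2:ℝ)| * x ^ ((2:ℝ) - 1)) •
          (fun u => (1/2 : ℝ) * (u ^ ((n:ℝ)/2 - 1) * (1+u) ^ (-s))) (x ^ (2:ℝ)) := by
      refine setIntegral_congr_ae measurableSet_Ioi (Filter.Eventually.of_forall fun y hy => ?_)
      have hy0 : (0:ℝ) < y := hy
      simp only [smul_eq_mul]
      rw [Real.rpow_two, show ((y:ℝ)^(n-1:ℕ)) = y ^ ((n:ℝ)-1) by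
        rw [← Real.rpow_natCast y (n-1), Nat.cast_sub hn, Nat.cast_one]]
      rw [← Real.rpow_natCast y 2, ← Real.rpow_mul hy0.le,
        show ((2:ℕ):ℝ) = (2:ℝ) by norm_num,
        show (2:ℝ)*((n:ℝ)/2-1) = (n:ℝ)-2 by push_cast; ring,
        show (2:ℝ)-1 = (1:ℝ) by norm_num, Real.rpow_one,
        show (n:ℝ)-1 = 1 + ((n:ℝ)-2) by ring, Real.rpow_add hy0, Real.rpow_one, abs_two]
      ring
    rw [congr1, key, MeasureTheory.integral_const_mul]
    rw [show -s = -((n:ℝ)/2 + (s - (n:ℝ)/2)) by ring]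
    rw [betaIoi ((n:ℝ)/2) (s - (n:ℝ)/2) hn2 (by linarith)]
    rw [show ((n:ℝ)/2 + (s - (n:ℝ)/2)) = s by ring]
  rw [hsub]
  have hG2 : (0:ℝ) < Real.Gamma ((n:ℝ)/2) := Real.Gamma_pos_of_pos hn2
  have hGs : (0:ℝ) < Real.Gamma s := Real.Gamma_pos_of_pos hs0
  have hGam1 : Real.Gamma ((n:ℝ)/2 + 1) = ((n:ℝ)/2) * Real.Gamma ((n:ℝ)/2) :=
    Real.Gamma_add_one hn2.ne'
  have hsqrtpi : (Real.sqrt Real.pi) ^ n = Real.pi ^ ((n:ℝ)/2) := by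
    rw [Real.sqrt_eq_rpow, ← Real.rpow_natCast (Real.pi ^ ((1:ℝ)/2)) n,
      ← Real.rpow_mul Real.pi_pos.le]
    congr 1
    push_cast
    ring
  simp only [ENNReal.ofReal_one, one_pow, one_mul, nsmul_eq_mul, smul_eq_mul]
  rw [ENNReal.toReal_ofReal (by positivity), hsqrtpi, hGam1]
  field_simp

open scoped MatrixOrder in
lemma quad_int (n : ℕ) (hn : 1 ≤ n) (s : ℝ) (hs : (n:ℝ)/2 < s)
    (D : Matrix (Fin n) (Fin n) ℝ) (hD : D.PosDef) (a : ℝ) (ha : 0 < a) :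
    ∫ x : Fin n → ℝ, (1 + a * (x ⬝ᵥ D.mulVec x)) ^ (-s) =
      (Real.sqrt a ^ n * Real.sqrt D.det)⁻¹ *
        (Real.pi ^ ((n:ℝ)/2) * Real.Gamma (s - n/2) / Real.Gamma s) := by
  classical
  set S := CFC.sqrt D with hS
  set M := Real.sqrt a • S with hM
  have hdet_pos : (0:ℝ) < D.det := hD.det_pos
  have hdetS2 : S.det * S.det = D.det := by
    rw [← Matrix.det_mul, CFC.sqrt_mul_sqrt_self D hD.posSemidef.nonneg]
  have habs : |M.det| = Real.sqrt a ^ n * Real.sqrt D.det := by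
    rw [hM, Matrix.det_smul, Fintype.card_fin, abs_mul, abs_pow,
      abs_of_nonneg (Real.sqrt_nonneg a), ← Real.sqrt_sq_eq_abs, sq, hdetS2]
  have habs_pos : (0:ℝ) < Real.sqrt a ^ n * Real.sqrt D.det := by positivity
  have hdet0 : M.det ≠ 0 := by
    intro h; rw [h, abs_zero] at habs; exact habs_pos.ne habs
  -- key pointwise identity
  have hkey : ∀ x : Fin n → ℝ, (M.mulVec x) ⬝ᵥ (M.mulVec x) = a * (x ⬝ᵥ D.mulVec x) := by
    intro x
    have hSx : S.mulVec x ⬝ᵥ S.mulVec x = x ⬝ᵥ D.mulVec x := by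
      conv_rhs => rw [← CFC.sqrt_mul_sqrt_self D hD.posSemidef.nonneg, ← hS, ← Matrix.mulVec_mulVec,
        Matrix.dotProduct_mulVec]
      have hsymm : Sᵀ = S := by
        have h := (CFC.sqrt_nonneg D).posSemidef.isHermitian
        have h2 : (CFC.sqrt D).IsSymm := by simpa [Matrix.conjTranspose] using h
        exact h2
      rw [← Matrix.mulVec_transpose, hsymm]
    rw [hM, Matrix.smul_mulVec, smul_dotProduct, dotProduct_smul,
      smul_eq_mul, smul_eq_mul, ← mul_assoc, Real.mul_self_sqrt ha.le, hSx]
  -- changes of variables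
  set T := Matrix.toLin' M with hT
  have hTdet : LinearMap.det T = M.det := LinearMap.det_toLin' M
  have hTcont : Continuous T := T.continuous_of_finiteDimensional
  have hFcont : Continuous (fun x : Fin n → ℝ => (1 + x ⬝ᵥ x) ^ (-s)) := by
    apply Continuous.rpow_const
    · exact continuous_const.add (continuous_finset_sum _ fun i _ =>
        ((continuous_apply i).mul (continuous_apply i)))
    · intro x
      left
      have : (0:ℝ) ≤ x ⬝ᵥ x := Finset.sum_nonneg fun i _ => mul_self_nonneg _
      positivity
  have hmap : Measure.map T (volume : Measure (Fin n → ℝ)) =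
      ENNReal.ofReal |(LinearMap.det T)⁻¹| • volume :=
    Measure.map_linearMap_addHaar_eq_smul_addHaar _ (hTdet ▸ hdet0)
  have step1 : ∫ x : Fin n → ℝ, (1 + a * (x ⬝ᵥ D.mulVec x)) ^ (-s) =
      ∫ x : Fin n → ℝ, (1 + (T x) ⬝ᵥ (T x)) ^ (-s) := by
    congr 1; funext x
    rw [hT, Matrix.toLin'_apply, hkey]
  have step2 : ∫ x : Fin n → ℝ, (1 + (T x) ⬝ᵥ (T x)) ^ (-s) =
      (Real.sqrt a ^ n * Real.sqrt D.det)⁻¹ * ∫ x : Fin n → ℝ, (1 + x ⬝ᵥ x) ^ (-s) := by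
    rw [← integral_map hTcont.aemeasurable hFcont.aestronglyMeasurable, hmap,
      integral_smul_measure, ENNReal.toReal_ofReal (abs_nonneg _), hTdet, abs_inv, habs,
      smul_eq_mul]
  have step3 : ∫ x : Fin n → ℝ, (1 + x ⬝ᵥ x) ^ (-s) =
      ∫ x : EuclideanSpace ℝ (Fin n), (1 + ‖x‖^2) ^ (-s) := by
    rw [← (EuclideanSpace.volume_preserving_symm_measurableEquiv_toLp (Fin n)).integral_comp
      (MeasurableEquiv.toLp 2 (Fin n → ℝ)).symm.measurableEmbedding
      (fun x : Fin n → ℝ => (1 + x ⬝ᵥ x) ^ (-s))]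
    congr 1; funext y
    have : (MeasurableEquiv.toLp 2 (Fin n → ℝ)).symm y ⬝ᵥ
        (MeasurableEquiv.toLp 2 (Fin n → ℝ)).symm y = ‖y‖^2 := by
      rw [EuclideanSpace.norm_eq, Real.sq_sqrt (by positivity)]
      simp [dotProduct, sq]
    rw [this]
  rw [step1, step2, step3, euclid_int n hn s hs]

set_option maxHeartbeats 2000000 in
/-- `q`-Rényi entropy of the `p`-Gaussian for `n/(n+2) < p < 1`,
`q > n(1−p)/2`, `q ≠ 1`. -/
theorem renyi_gaussF (n : ℕ) (hn : 1 ≤ n) (p q : ℝ)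
    (hp₁ : (n : ℝ) / (n + 2) < p) (hp₂ : p < 1)
    (hq : (n : ℝ) * (1 - p) / 2 < q) (hq1 : q ≠ 1)
    (D : Matrix (Fin n) (Fin n) ℝ) (hD : D.PosDef) (u : Fin n → ℝ) :
    renyi n q (gaussF n p D u) =
      (n / 2) * Real.log (Real.pi * (2 * p - n * (1 - p)) / (1 - p)) +
        1 / (1 - q) * Real.log
          (Real.Gamma (1 / (1 - p)) ^ q * Real.Gamma (q / (1 - p) - n / 2) /
            (Real.Gamma (1 / (1 - p) - n / 2) ^ q * Real.Gamma (q / (1 - p)))) -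
        (1 / 2) * Real.log D.det := by
  have hnR : (1:ℝ) ≤ (n:ℝ) := by exact_mod_cast hn
  have hP1 : (0:ℝ) < 1 - p := by linarith
  have hT : (0:ℝ) < 2 * p - n * (1 - p) := by
    have h2 : (0:ℝ) < (n:ℝ) + 2 := by linarith
    have := (div_lt_iff₀ h2).mp hp₁
    nlinarith
  set a : ℝ := (1 - p) / (2 * p - n * (1 - p)) with ha_def
  have ha : 0 < a := div_pos hP1 hT
  have hq0 : (0:ℝ) < q := lt_of_le_of_lt (by positivity) hq
  set s : ℝ := q / (1 - p) with hs_def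
  have hs : (n:ℝ)/2 < s := by
    rw [hs_def, lt_div_iff₀ hP1]
    calc (n:ℝ)/2 * (1-p) = (n:ℝ) * (1-p) / 2 := by ring
    _ < q := hq
  have hγ2 : (0:ℝ) < 1/(1-p) - n/2 := by
    have h2 : (0:ℝ) < (n:ℝ) + 2 := by linarith
    have h3 := (div_lt_iff₀ h2).mp hp₁
    rw [sub_pos, div_lt_div_iff₀ (by linarith) hP1]
    nlinarith
  have hγ0 : (0:ℝ) < 1/(1-p) := by positivity
  have hdet : (0:ℝ) < D.det := hD.det_pos
  have hG1 : (0:ℝ) < Real.Gamma (1/(1-p)) := Real.Gamma_pos_of_pos hγ0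
  have hG2 : (0:ℝ) < Real.Gamma (1/(1-p) - n/2) := Real.Gamma_pos_of_pos hγ2
  have hG3 : (0:ℝ) < Real.Gamma (s - n/2) := Real.Gamma_pos_of_pos (by linarith)
  have hG4 : (0:ℝ) < Real.Gamma s := Real.Gamma_pos_of_pos (by positivity)
  have hA : (0:ℝ) < gaussA n p := by
    rw [gaussA, ← ha_def]
    have := Real.pi_pos
    positivity
  have hQ : ∀ v : Fin n → ℝ, (0:ℝ) ≤ v ⬝ᵥ D.mulVec v := by
    intro v
    have h := hD.posSemidef.dotProduct_mulVec_nonneg v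
    simpa using h
  -- pointwise power
  have hpoint : ∀ x : Fin n → ℝ, gaussF n p D u x ^ q =
      (gaussA n p * Real.sqrt D.det) ^ q *
        (1 + a * ((x - u) ⬝ᵥ D.mulVec (x - u))) ^ (-s) := by
    intro x
    rw [gaussF, ← ha_def]
    have hb : (0:ℝ) < 1 + a * ((x - u) ⬝ᵥ D.mulVec (x - u)) := by
      have := hQ (x - u); nlinarith
    rw [Real.mul_rpow (by positivity) (Real.rpow_nonneg hb.le _), ← Real.rpow_mul hb.le,
      show 1/(p-1) * q = -s by
        have hp1 : p - 1 ≠ 0 := by linarith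
        have hp2 : (1:ℝ) - p ≠ 0 := by linarith
        rw [hs_def]; field_simp; ring]
  have hint : ∫ x : Fin n → ℝ, gaussF n p D u x ^ q =
      (gaussA n p * Real.sqrt D.det) ^ q *
        ((Real.sqrt a ^ n * Real.sqrt D.det)⁻¹ *
          (Real.pi ^ ((n:ℝ)/2) * Real.Gamma (s - n/2) / Real.Gamma s)) := by
    calc ∫ x : Fin n → ℝ, gaussF n p D u x ^ q
        = ∫ x : Fin n → ℝ, (gaussA n p * Real.sqrt D.det) ^ q *
            (1 + a * ((x - u) ⬝ᵥ D.mulVec (x - u))) ^ (-s) := by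
          congr 1; funext x; exact hpoint x
      _ = (gaussA n p * Real.sqrt D.det) ^ q *
            ∫ x : Fin n → ℝ, (1 + a * ((x - u) ⬝ᵥ D.mulVec (x - u))) ^ (-s) :=
          MeasureTheory.integral_const_mul _ _
      _ = (gaussA n p * Real.sqrt D.det) ^ q *
            ∫ x : Fin n → ℝ, (1 + a * (x ⬝ᵥ D.mulVec x)) ^ (-s) := by
          rw [integral_sub_right_eq_self
            (fun y : Fin n → ℝ => (1 + a * (y ⬝ᵥ D.mulVec y)) ^ (-s)) u]
      _ = _ := by rw [quad_int n hn s hs D hD a ha]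
  rw [renyi, hint]
  -- now pure log computation
  have hsqrtdet : (0:ℝ) < Real.sqrt D.det := Real.sqrt_pos.mpr hdet
  have hsqrta : (0:ℝ) < Real.sqrt a := Real.sqrt_pos.mpr ha
  have hpi := Real.pi_pos
  have h1q : (1:ℝ) - q ≠ 0 := fun h => hq1 (by linarith)
  have hloga : Real.log a = Real.log (1-p) - Real.log (2*p - n*(1-p)) := by
    rw [ha_def, Real.log_div hP1.ne' hT.ne']
  have hlogA : Real.log (gaussA n p) =
      ((n:ℝ)/2) * Real.log a + Real.log (Real.Gamma (1/(1-p))) -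
      (((n:ℝ)/2) * Real.log Real.pi + Real.log (Real.Gamma (1/(1-p) - n/2))) := by
    rw [gaussA, ← ha_def, Real.log_div (by positivity) (by positivity),
      Real.log_mul (by positivity) hG1.ne', Real.log_mul (by positivity) hG2.ne',
      Real.log_rpow ha, Real.log_rpow hpi]
  rw [Real.log_mul (by positivity) (by positivity),
    Real.log_rpow (by positivity),
    Real.log_mul hA.ne' (by positivity),
    Real.log_mul (by positivity) (by positivity),
    Real.log_inv,
    Real.log_mul (by positivity) (by positivity),
    Real.log_pow,
    Real.log_sqrt ha.le, Real.log_sqrt hdet.le,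
    Real.log_div (by positivity) hG4.ne',
    Real.log_mul (by positivity) hG3.ne',
    Real.log_rpow hpi,
    hlogA, hloga,
    Real.log_div (by positivity) hP1.ne',
    Real.log_mul hpi.ne' hT.ne',
    Real.log_div (by positivity) (by positivity),
    Real.log_mul (by positivity) hG3.ne',
    Real.log_mul (by positivity) hG4.ne',
    Real.log_rpow hG1, Real.log_rpow hG2]
  field_simp
  ring
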